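/- Let G be a finite graph and let G⁺ be the graph obtained from G by adding one new vertex adjacent to all vertices of G. Then the chromatic number of G⁺ equals χ(G)+1, and for every natural number k, the Bell colouring graph of partitions of V(G) into at least k independent sets is isomorphic to the Bell colouring graph of partitions of V(G⁺) into at least k+1 independent sets. (Here the Bell colouring graph has as vertices partitions of the vertex set into independent sets, with an edge between two partitions iff one is obtained from the other by changing the part of a single vertex.) -/

import Mathlib

open Finset

variable {V : Type*} [Fintype V] [DecidableEq V]

def IsISP (G : SimpleGraph V) (P : Finpartition (univ : Finset V)) : Prop :=
  ∀ A ∈ P.parts, ∀ u ∈ A, ∀ v ∈ A, ¬ G.Adj u v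

def samePart (P : Finpartition (univ : Finset V)) (u v : V) : Prop :=
  ∃ A ∈ P.parts, u ∈ A ∧ v ∈ A

def MovedBy (P Q : Finpartition (univ : Finset V)) (x : V) : Prop :=
  P ≠ Q ∧ ∀ u v : V, u ≠ x → v ≠ x → (samePart P u v ↔ samePart Q u v)

def BellGraph (G : SimpleGraph V) :
    SimpleGraph {P : Finpartition (univ : Finset V) // IsISP G P} where
  Adj P Q := ∃ x, MovedBy P.1 Q.1 x
  symm := by
    refine ⟨?_⟩
    rintro P Q ⟨x, hne, h⟩
    exact ⟨x, Ne.symm hne, fun u v hu hv => (h u v hu hv).symm⟩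
  loopless := by
    refine ⟨?_⟩
    rintro P ⟨x, hne, _⟩
    exact hne rfl

def UpperBell (G : SimpleGraph V) (k : ℕ) :
    SimpleGraph {P : Finpartition (univ : Finset V) // IsISP G P ∧ k ≤ P.parts.card} where
  Adj P Q := ∃ x, MovedBy P.1 Q.1 x
  symm := by
    refine ⟨?_⟩
    rintro P Q ⟨x, hne, h⟩
    exact ⟨x, Ne.symm hne, fun u v hu hv => (h u v hu hv).symm⟩
  loopless := by
    refine ⟨?_⟩
    rintro P ⟨x, hne, _⟩
    exact hne rfl

def IsUniversal (G : SimpleGraph V) (v : V) : Prop :=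
  ∀ w, w ≠ v → G.Adj v w

def addUniversal (G : SimpleGraph V) : SimpleGraph (Option V) where
  Adj a b := a ≠ b ∧ ∀ u v, a = some u → b = some v → G.Adj u v
  symm := by
    refine ⟨?_⟩
    rintro a b ⟨h, h2⟩
    exact ⟨h.symm, fun u v hu hv => (h2 v u hv hu).symm⟩
  loopless := by refine ⟨?_⟩; rintro a ⟨h, _⟩; exact h rfl

set_option linter.unusedSectionVars false
section Aux
variable {V : Type*} [Fintype V] [DecidableEq V]

lemma image_some_ne_none_singleton (A : Finset V) : Finset.image some A ≠ ({none} : Finset (Option V)) := by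
  intro h
  have : (none : Option V) ∈ Finset.image some A := h ▸ Finset.mem_singleton_self _
  simp at this

/-- The cone partition. -/
def cone (P : Finpartition (univ : Finset V)) : Finpartition (univ : Finset (Option V)) where
  parts := insert {none} (P.parts.image (Finset.image some))
  supIndep := by
    rw [Finset.supIndep_iff_pairwiseDisjoint]
    intro a ha b hb hab
    simp only [Finset.coe_insert, Set.mem_insert_iff, Finset.coe_image, Set.mem_image,
      Finset.mem_coe] at ha hb
    rcases ha with rfl | ⟨A, hA, rfl⟩ <;> rcases hb with rfl | ⟨B, hB, rfl⟩
    · exact absurd rfl hab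
    · simp only [id, Finset.disjoint_left]
      intro x hx; simp only [Finset.mem_singleton] at hx; subst hx; simp
    · simp only [id, Finset.disjoint_right]
      intro x hx; simp only [Finset.mem_singleton] at hx; subst hx; simp
    · have hABne : A ≠ B := fun h => hab (by rw [h])
      have hd := P.disjoint hA hB hABne
      simp only [id, Finset.disjoint_left] at hd ⊢
      rintro x hx hx'
      simp only [Finset.mem_image] at hx hx'
      obtain ⟨a, ha, rfl⟩ := hx
      obtain ⟨b, hb, hba⟩ := hx'
      exact hd ha (by rwa [Option.some_injective V hba.symm])
  sup_parts := by
    ext x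
    simp only [Finset.mem_sup, Finset.mem_insert, Finset.mem_image, Finset.mem_univ, iff_true, id]
    cases x with
    | none => exact ⟨{none}, Or.inl rfl, Finset.mem_singleton_self _⟩
    | some v =>
      obtain ⟨A, hA, hv⟩ := P.exists_mem (Finset.mem_univ v)
      exact ⟨A.image some, Or.inr ⟨A, hA, rfl⟩, Finset.mem_image_of_mem _ hv⟩
  bot_notMem := by
    simp only [Finset.bot_eq_empty, Finset.mem_insert, Finset.mem_image]
    rintro (h | ⟨A, hA, h⟩)
    · exact (Finset.singleton_ne_empty _) h.symm
    · rw [Finset.image_eq_empty] at h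
      exact P.bot_notMem (by rw [Finset.bot_eq_empty, ← h]; exact hA)

/-- The inverse: restrict a partition of `Option V` to `V`. -/
def uncone (Q : Finpartition (univ : Finset (Option V))) : Finpartition (univ : Finset V) where
  parts := (Q.parts.erase {none}).image Finset.eraseNone
  supIndep := by
    rw [Finset.supIndep_iff_pairwiseDisjoint]
    intro a ha b hb hab
    simp only [Finset.coe_image, Set.mem_image, Finset.mem_coe, Finset.mem_erase] at ha hb
    obtain ⟨A, ⟨hA1, hA⟩, rfl⟩ := ha
    obtain ⟨B, ⟨hB1, hB⟩, rfl⟩ := hb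
    have hABne : A ≠ B := fun h => hab (by rw [h])
    have hd := Q.disjoint hA hB hABne
    simp only [id, Finset.disjoint_left] at hd ⊢
    intro x hx hx'
    rw [Finset.mem_eraseNone] at hx hx'
    exact hd hx hx'
  sup_parts := by
    ext v
    simp only [Finset.mem_sup, Finset.mem_image, Finset.mem_erase, Finset.mem_univ, iff_true, id]
    obtain ⟨A, hA, hv⟩ := Q.exists_mem (Finset.mem_univ (some v))
    refine ⟨Finset.eraseNone A, ⟨A, ⟨?_, hA⟩, rfl⟩, Finset.mem_eraseNone.2 hv⟩
    rintro rfl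
    simp at hv
  bot_notMem := by
    simp only [Finset.bot_eq_empty, Finset.mem_image, Finset.mem_erase]
    rintro ⟨A, ⟨hA1, hA⟩, h⟩
    apply hA1
    have hAne : A.Nonempty := Q.nonempty_of_mem_parts hA
    ext x
    simp only [Finset.mem_singleton]
    constructor
    · intro hx
      cases x with
      | none => rfl
      | some v =>
        exfalso
        have : v ∈ Finset.eraseNone A := Finset.mem_eraseNone.2 hx
        simp [h] at this
    · rintro rfl
      obtain ⟨y, hy⟩ := hAne
      cases y with
      | none => exact hy
      | some v =>
        exfalso
        have : v ∈ Finset.eraseNone A := Finset.mem_eraseNone.2 hy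
        simp [h] at this

lemma uncone_cone (P : Finpartition (univ : Finset V)) : uncone (cone P) = P := by
  ext1
  show ((insert {none} (P.parts.image (Finset.image some))).erase {none}).image Finset.eraseNone = P.parts
  rw [Finset.erase_insert (by
    simp only [Finset.mem_image, not_exists, not_and]
    intro A _
    exact image_some_ne_none_singleton A)]
  rw [Finset.image_image]
  have : ∀ A ∈ P.parts, (Finset.eraseNone ∘ Finset.image some) A = id A := by
    intro A _; simp [Finset.eraseNone_image_some]
  rw [Finset.image_congr this, Finset.image_id]

end Aux
set_option linter.unusedSectionVars false
section Aux2
variable {V : Type*} [Fintype V] [DecidableEq V]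

lemma samePart_symm {P : Finpartition (univ : Finset V)} {u v : V} (h : samePart P u v) :
    samePart P v u := by
  obtain ⟨A, hA, hu, hv⟩ := h
  exact ⟨A, hA, hv, hu⟩

lemma eq_of_samePart_iff {P Q : Finpartition (univ : Finset V)}
    (h : ∀ u v, samePart P u v ↔ samePart Q u v) : P = Q := by
  have key : ∀ (P Q : Finpartition (univ : Finset V)),
      (∀ u v, samePart P u v ↔ samePart Q u v) → P.parts ⊆ Q.parts := by
    intro P Q h A hA
    obtain ⟨u, hu⟩ := P.nonempty_of_mem_parts hA
    obtain ⟨B, hB, huB⟩ := Q.exists_mem (Finset.mem_univ u)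
    have : A = B := by
      ext v
      constructor
      · intro hv
        have : samePart Q u v := (h u v).1 ⟨A, hA, hu, hv⟩
        obtain ⟨B', hB', huB', hvB'⟩ := this
        rwa [Q.eq_of_mem_parts hB' hB huB' huB] at hvB'
      · intro hv
        have : samePart P u v := (h u v).2 ⟨B, hB, huB, hv⟩
        obtain ⟨A', hA', huA', hvA'⟩ := this
        rwa [P.eq_of_mem_parts hA' hA huA' hu] at hvA'
    rwa [this]
  exact Finpartition.ext (Finset.Subset.antisymm (key P Q h) (key Q P (fun u v => (h u v).symm)))

lemma cone_injective : Function.Injective (cone (V := V)) := by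
  intro P Q h
  rw [← uncone_cone P, ← uncone_cone Q, h]

lemma samePart_cone_some {P : Finpartition (univ : Finset V)} {u v : V} :
    samePart (cone P) (some u) (some v) ↔ samePart P u v := by
  constructor
  · rintro ⟨B, hB, hu, hv⟩
    simp only [cone, Finset.mem_insert, Finset.mem_image] at hB
    rcases hB with rfl | ⟨A, hA, rfl⟩
    · simp at hu
    · simp only [Finset.mem_image] at hu hv
      obtain ⟨a, ha, ha'⟩ := hu
      obtain ⟨b, hb, hb'⟩ := hv
      cases Option.some_injective V ha'
      cases Option.some_injective V hb'
      exact ⟨A, hA, ha, hb⟩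
  · rintro ⟨A, hA, hu, hv⟩
    refine ⟨A.image some, ?_, Finset.mem_image_of_mem _ hu, Finset.mem_image_of_mem _ hv⟩
    simp only [cone, Finset.mem_insert, Finset.mem_image]
    exact Or.inr ⟨A, hA, rfl⟩

lemma samePart_cone_none {P : Finpartition (univ : Finset V)} {w : Option V} :
    samePart (cone P) none w ↔ w = none := by
  constructor
  · rintro ⟨B, hB, hn, hw⟩
    simp only [cone, Finset.mem_insert, Finset.mem_image] at hB
    rcases hB with rfl | ⟨A, hA, rfl⟩
    · simpa using hw
    · simp at hn
  · rintro rfl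
    exact ⟨{none}, by simp [cone], Finset.mem_singleton_self _, Finset.mem_singleton_self _⟩

lemma cone_parts_card (P : Finpartition (univ : Finset V)) :
    (cone P).parts.card = P.parts.card + 1 := by
  show (insert {none} (P.parts.image (Finset.image some))).card = _
  rw [Finset.card_insert_of_notMem (by
    simp only [Finset.mem_image, not_exists, not_and]
    intro A _
    exact image_some_ne_none_singleton A)]
  rw [Finset.card_image_of_injective _ (Finset.image_injective (Option.some_injective V))]

lemma isISP_cone_iff {G : SimpleGraph V} {P : Finpartition (univ : Finset V)} :
    IsISP (addUniversal G) (cone P) ↔ IsISP G P := by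
  constructor
  · intro h A hA u hu v hv hadj
    refine h (A.image some) ?_ (some u) (Finset.mem_image_of_mem _ hu)
      (some v) (Finset.mem_image_of_mem _ hv) ?_
    · simp only [cone, Finset.mem_insert, Finset.mem_image]
      exact Or.inr ⟨A, hA, rfl⟩
    · exact ⟨by simpa using G.ne_of_adj hadj, fun a b ha hb => by
        cases ha; cases hb; exact hadj⟩
  · intro h B hB u hu v hv hadj
    simp only [cone, Finset.mem_insert, Finset.mem_image] at hB
    rcases hB with rfl | ⟨A, hA, rfl⟩
    · simp only [Finset.mem_singleton] at hu hv
      subst hu; subst hv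
      exact (addUniversal G).loopless.irrefl _ hadj
    · simp only [Finset.mem_image] at hu hv
      obtain ⟨a, ha, rfl⟩ := hu
      obtain ⟨b, hb, rfl⟩ := hv
      exact h A hA a ha b hb (hadj.2 a b rfl rfl)

lemma singleton_none_mem {G : SimpleGraph V} {Q : Finpartition (univ : Finset (Option V))}
    (hQ : IsISP (addUniversal G) Q) : ({none} : Finset (Option V)) ∈ Q.parts := by
  obtain ⟨A, hA, hn⟩ := Q.exists_mem (Finset.mem_univ (none : Option V))
  have : A = {none} := by
    ext x
    simp only [Finset.mem_singleton]
    constructor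
    · intro hx
      by_contra hxn
      exact hQ A hA none hn x hx ⟨fun h => hxn h.symm, fun u v hu _ => by simp at hu⟩
    · rintro rfl; exact hn
  rwa [this] at hA

lemma cone_uncone {G : SimpleGraph V} {Q : Finpartition (univ : Finset (Option V))}
    (hQ : IsISP (addUniversal G) Q) : cone (uncone Q) = Q := by
  have hmem := singleton_none_mem hQ
  ext1
  show insert {none} (((Q.parts.erase {none}).image Finset.eraseNone).image (Finset.image some))
      = Q.parts
  rw [Finset.image_image]
  have : ∀ A ∈ Q.parts.erase {none}, (Finset.image some ∘ Finset.eraseNone) A = id A := by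
    intro A hA
    obtain ⟨hA1, hA2⟩ := Finset.mem_erase.1 hA
    simp only [Function.comp_apply, id]
    ext x
    simp only [Finset.mem_image, Finset.mem_eraseNone]
    constructor
    · rintro ⟨a, ha, rfl⟩; exact ha
    · intro hx
      cases x with
      | none =>
        exact absurd (Q.eq_of_mem_parts hA2 hmem hx (Finset.mem_singleton_self _)) hA1
      | some v => exact ⟨v, hx, rfl⟩
  rw [Finset.image_congr this, Finset.image_id, Finset.insert_erase hmem]

end Aux2
set_option linter.unusedSectionVars false
section Aux3
variable {V : Type*} [Fintype V] [DecidableEq V]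

lemma movedBy_cone {P Q : Finpartition (univ : Finset V)} {x : V} (h : MovedBy P Q x) :
    MovedBy (cone P) (cone Q) (some x) := by
  obtain ⟨hne, hpres⟩ := h
  refine ⟨fun hc => hne (cone_injective hc), ?_⟩
  intro u v hu hv
  match u, v with
  | none, none => simp [samePart_cone_none]
  | none, some b => simp [samePart_cone_none]
  | some a, none =>
    constructor
    · intro hs
      have := samePart_cone_none.1 (samePart_symm hs)
      simp at this
    · intro hs
      have := samePart_cone_none.1 (samePart_symm hs)
      simp at this
  | some a, some b =>
    rw [samePart_cone_some, samePart_cone_some]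
    exact hpres a b (fun h => hu (by rw [h])) (fun h => hv (by rw [h]))

lemma exists_movedBy_cone {P Q : Finpartition (univ : Finset V)} :
    (∃ y, MovedBy (cone P) (cone Q) y) ↔ ∃ x, MovedBy P Q x := by
  constructor
  · rintro ⟨y, hne, hpres⟩
    have hPQ : P ≠ Q := fun h => hne (by rw [h])
    cases y with
    | none =>
      exfalso
      apply hPQ
      apply eq_of_samePart_iff
      intro u v
      rw [← samePart_cone_some (P := P), ← samePart_cone_some (P := Q)]
      exact hpres (some u) (some v) (by simp) (by simp)
    | some x =>
      refine ⟨x, hPQ, fun u v hu hv => ?_⟩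
      rw [← samePart_cone_some (P := P), ← samePart_cone_some (P := Q)]
      exact hpres (some u) (some v) (by simpa using hu) (by simpa using hv)
  · rintro ⟨x, h⟩
    exact ⟨some x, movedBy_cone h⟩

lemma colorable_addUniversal_succ {G : SimpleGraph V} {n : ℕ} :
    (addUniversal G).Colorable (n + 1) ↔ G.Colorable n := by
  constructor
  · rintro ⟨C⟩
    let e := Equiv.swap (C none) (Fin.last n)
    have hC' : ∀ v : V, (e (C (some v))).val < n := by
      intro v
      have hadj : (addUniversal G).Adj none (some v) :=
        ⟨by simp, fun a b ha _ => by simp at ha⟩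
      have h1 : C (some v) ≠ C none := fun h => (C.valid hadj) h.symm
      have h2 : e (C (some v)) ≠ Fin.last n := by
        intro h
        exact h1 (e.injective (h.trans (Equiv.swap_apply_left (C none) (Fin.last n)).symm))
      have h2' : (e (C (some v))).val ≠ n := by
        intro hv
        exact h2 (Fin.ext (by simpa using hv))
      have := (e (C (some v))).isLt
      omega
    refine ⟨SimpleGraph.Coloring.mk (fun v => ⟨(e (C (some v))).val, hC' v⟩) ?_⟩
    intro u v hadj h
    have hadj' : (addUniversal G).Adj (some u) (some v) :=
      ⟨by simpa using G.ne_of_adj hadj, fun a b ha hb => by cases ha; cases hb; exact hadj⟩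
    apply C.valid hadj'
    apply e.injective
    have hval := congrArg Fin.val h
    simp only [] at hval
    exact Fin.ext hval
  · rintro ⟨C⟩
    refine ⟨SimpleGraph.Coloring.mk
      (fun x => x.elim (Fin.last n) (fun v => (C v).castSucc)) ?_⟩
    rintro a b ⟨hne, h2⟩ heq
    match a, b with
    | none, none => exact hne rfl
    | none, some v =>
      exact absurd heq.symm (Fin.ne_of_lt (Fin.castSucc_lt_last (C v)))
    | some u, none =>
      exact absurd heq (Fin.ne_of_lt (Fin.castSucc_lt_last (C u)))
    | some u, some v =>
      exact C.valid (h2 u v rfl rfl) (Fin.castSucc_injective n heq)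

lemma chromatic_addUniversal (G : SimpleGraph V) :
    (addUniversal G).chromaticNumber = G.chromaticNumber + 1 := by
  have hG : G.Colorable (Fintype.card V) := G.colorable_of_fintype
  have hne : G.chromaticNumber ≠ ⊤ :=
    (lt_of_le_of_lt hG.chromaticNumber_le (WithTop.coe_lt_top _)).ne
  obtain ⟨m, hm⟩ := (SimpleGraph.chromaticNumber_ne_top_iff_exists).1 hne
  set M := ENat.toNat G.chromaticNumber with hM
  have hχ : G.chromaticNumber = (M : ℕ∞) := (ENat.coe_toNat hne).symm
  have hMcol : G.Colorable M := SimpleGraph.colorable_chromaticNumber hm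
  apply le_antisymm
  · have : (addUniversal G).Colorable (M + 1) := colorable_addUniversal_succ.2 hMcol
    calc (addUniversal G).chromaticNumber ≤ ((M + 1 : ℕ) : ℕ∞) := this.chromaticNumber_le
      _ = G.chromaticNumber + 1 := by rw [hχ]; push_cast; rfl
  · rw [hχ, SimpleGraph.chromaticNumber_eq_biInf (G := addUniversal G)]
    refine le_iInf₂ (fun n hn => ?_)
    match n with
    | 0 =>
      exfalso
      obtain ⟨C⟩ := hn
      exact (C none).elim0
    | n + 1 =>
      have : G.Colorable n := colorable_addUniversal_succ.1 hn
      have hle : (M : ℕ) ≤ n := by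
        have := this.chromaticNumber_le
        rw [hχ, Nat.cast_le] at this
        exact this
      calc (M : ℕ∞) + 1 ≤ (n : ℕ∞) + 1 := by
            exact add_le_add_left (by exact_mod_cast hle) 1
        _ = ((n + 1 : ℕ) : ℕ∞) := by push_cast; rfl

end Aux3
theorem stmt0 (G : SimpleGraph V) :
    (addUniversal G).chromaticNumber = G.chromaticNumber + 1 ∧
    ∀ k : ℕ, Nonempty (UpperBell G k ≃g UpperBell (addUniversal G) (k + 1)) := by
  refine ⟨chromatic_addUniversal G, fun k => ⟨⟨⟨?_, ?_, ?_, ?_⟩, ?_⟩⟩⟩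
  · exact fun P => ⟨cone P.1, isISP_cone_iff.2 P.2.1, by
      rw [cone_parts_card]; exact Nat.succ_le_succ P.2.2⟩
  · exact fun Q => ⟨uncone Q.1, isISP_cone_iff.1 (by rw [cone_uncone Q.2.1]; exact Q.2.1), by
      have h1 := Q.2.2
      have hc : Q.1.parts.card = (uncone Q.1).parts.card + 1 := by
        conv_lhs => rw [← cone_uncone Q.2.1]
        exact cone_parts_card _
      omega⟩
  · intro P
    exact Subtype.ext (uncone_cone P.1)
  · intro Q
    exact Subtype.ext (cone_uncone Q.2.1)
  · intro P Q
    exact exists_movedBy_cone
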